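/- Let $K \ge 1$ be an integer, let $N_1 > N_2 > \dots > N_K > 0$ be reals, set $Q_k = 1/N_k$ for $1 \le k \le K$, let $E_0 \ge 0$, and fix $\beta_0 = 1$. Define, for $\beta = (\beta_1,\dots,\beta_K)$ with all $\beta_k > 0$, $$E_D(\beta) = \sum_{k=1}^{K} N_k \log\frac{E_0 Q_k + \beta_k}{E_0 Q_k + \beta_{k-1}}.$$ Then $E_D$ is a concave function of $\beta$ on the open positive orthant $\{\beta \in \mathbb{R}^K : \beta_k > 0 \text{ for all } k\}$. -/

import Mathlib

open Set Real Finset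

private lemma aux_concave (n m a b : ℝ) (hn : 0 < n) (hm : 0 ≤ m) (hmn : m ≤ n)
    (ha : 0 ≤ a) (hab : a ≤ b) :
    ConcaveOn ℝ (Set.Ioi (0:ℝ))
      (fun x => n * Real.log (a + x) - m * Real.log (b + x)) := by
  have hint : interior (Set.Ioi (0:ℝ)) = Set.Ioi 0 := interior_Ioi
  have hax : ∀ x ∈ Set.Ioi (0:ℝ), 0 < a + x := fun x hx => by
    have : (0:ℝ) < x := hx; linarith
  have hbx : ∀ x ∈ Set.Ioi (0:ℝ), 0 < b + x := fun x hx => by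
    have : (0:ℝ) < x := hx; linarith
  apply concaveOn_of_hasDerivWithinAt2_nonpos (convex_Ioi 0)
    (f' := fun x => n * (a + x)⁻¹ - m * (b + x)⁻¹)
    (f'' := fun x => (-(n * ((a + x)^2)⁻¹)) + m * ((b + x)^2)⁻¹)
  · apply ContinuousOn.sub
    · exact continuousOn_const.mul ((continuousOn_const.add continuousOn_id).log
        (fun x hx => (hax x hx).ne'))
    · exact continuousOn_const.mul ((continuousOn_const.add continuousOn_id).log
        (fun x hx => (hbx x hx).ne'))
  · rw [hint]
    intro x hx
    have h1 : HasDerivAt (fun x : ℝ => a + x) 1 x := (hasDerivAt_id x).const_add a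
    have h2 : HasDerivAt (fun x : ℝ => b + x) 1 x := (hasDerivAt_id x).const_add b
    have hd : HasDerivAt (fun x => n * Real.log (a + x) - m * Real.log (b + x))
        (n * (a + x)⁻¹ - m * (b + x)⁻¹) x := by
      have := ((h1.log (hax x hx).ne').const_mul n).sub ((h2.log (hbx x hx).ne').const_mul m)
      simp only [Pi.sub_def] at this
      simpa [one_div] using this
    exact hd.hasDerivWithinAt
  · rw [hint]
    intro x hx
    have h1 : HasDerivAt (fun x : ℝ => a + x) 1 x := (hasDerivAt_id x).const_add a
    have h2 : HasDerivAt (fun x : ℝ => b + x) 1 x := (hasDerivAt_id x).const_add b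
    have hd : HasDerivAt (fun x => n * (a + x)⁻¹ - m * (b + x)⁻¹)
        ((-(n * ((a + x)^2)⁻¹)) + m * ((b + x)^2)⁻¹) x := by
      have := ((h1.inv (hax x hx).ne').const_mul n).sub ((h2.inv (hbx x hx).ne').const_mul m)
      simp only [Pi.sub_def, Pi.inv_def] at this
      refine this.congr_deriv ?_
      ring
    exact hd.hasDerivWithinAt
  · rw [hint]
    intro x hx
    have h1 : (0:ℝ) < a + x := hax x hx
    have h2 : (0:ℝ) < b + x := hbx x hx
    have hsq : (a + x)^2 ≤ (b + x)^2 := by nlinarith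
    have t1 : m * (a + x)^2 ≤ m * (b + x)^2 := mul_le_mul_of_nonneg_left hsq hm
    have t2 : m * (b + x)^2 ≤ n * (b + x)^2 := mul_le_mul_of_nonneg_right hmn (by positivity)
    have key : m * (a + x)^2 ≤ n * (b + x)^2 := le_trans t1 t2
    have : m * ((b + x)^2)⁻¹ ≤ n * ((a + x)^2)⁻¹ := by
      rw [← div_eq_mul_inv, ← div_eq_mul_inv, div_le_div_iff₀ (by positivity) (by positivity)]
      nlinarith
    linarith

private lemma shift_sum (K : ℕ) (hK : 1 ≤ K) (t : ℕ → ℝ → ℝ) (β : ℕ → ℝ) :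
    ∑ k ∈ Finset.Icc 1 K, t k (if k = 1 then 1 else β (k-1)) =
      t 1 1 + ∑ k ∈ Finset.Icc 1 K, (if k < K then t (k+1) (β k) else 0) := by
  induction K, hK using Nat.le_induction with
  | base => simp
  | succ K hK ih =>
    rw [Finset.sum_Icc_succ_top (by omega), Finset.sum_Icc_succ_top (by omega : 1 ≤ K + 1), ih]
    have h1 : ∀ k ∈ Finset.Icc 1 K, (if k < K + 1 then t (k+1) (β k) else 0) =
        (if k < K then t (k+1) (β k) else 0) + (if k = K then t (k+1) (β k) else 0) := by
      intro k hk
      have hk2 := (Finset.mem_Icc.mp hk).2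
      rcases eq_or_lt_of_le hk2 with h | h
      · simp [h]
      · rw [if_pos (by omega : k < K + 1), if_pos h, if_neg (by omega : ¬ k = K), add_zero]
    rw [Finset.sum_congr rfl h1, Finset.sum_add_distrib, Finset.sum_ite_eq' (Finset.Icc 1 K) K,
      if_pos (Finset.mem_Icc.mpr ⟨hK, le_rfl⟩), if_neg (by omega : ¬ (K + 1 = 1)),
      if_neg (lt_irrefl (K+1))]
    simp only [Nat.add_sub_cancel]
    ring

private noncomputable def gfun (N : ℕ → ℝ) (K : ℕ) (E0 : ℝ) (k : ℕ) (x : ℝ) : ℝ :=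
  N k * Real.log (E0 * (1 / N k) + x) -
    (if k < K then N (k+1) * Real.log (E0 * (1 / N (k+1)) + x) else 0)

theorem ED_concave
    (K : ℕ) (hK : 1 ≤ K) (N : ℕ → ℝ)
    (hNmono : ∀ k, 1 ≤ k → k < K → N (k + 1) < N k)
    (hNK : 0 < N K)
    (E0 : ℝ) (hE0 : 0 ≤ E0)
    (ED : (ℕ → ℝ) → ℝ)
    (hED : ∀ β : ℕ → ℝ, ED β = ∑ k ∈ Finset.Icc 1 K,
      N k * Real.log ((E0 * (1 / N k) + β k) /
        (E0 * (1 / N k) + (if k = 1 then 1 else β (k - 1))))) :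
    ConcaveOn ℝ {β : ℕ → ℝ | ∀ k, 0 < β k} ED := by
  classical
  have hs : Convex ℝ {β : ℕ → ℝ | ∀ k, 0 < β k} := by
    have : {β : ℕ → ℝ | ∀ k, 0 < β k} = Set.pi Set.univ (fun _ : ℕ => Set.Ioi (0:ℝ)) := by
      ext β; simp [Set.mem_pi]
    rw [this]
    exact convex_pi (fun i _ => convex_Ioi 0)
  have hNpos : ∀ k, 1 ≤ k → k ≤ K → 0 < N k := by
    have H : ∀ d k, k + d = K → 1 ≤ k → 0 < N k := by
      intro d
      induction d with
      | zero => intro k hk _; rw [Nat.add_zero] at hk; subst hk; exact hNK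
      | succ d ih =>
        intro k hk h1
        have hk1 := ih (k+1) (by omega) (by omega)
        have := hNmono k h1 (by omega)
        linarith
    intro k h1 h2; exact H (K - k) k (by omega) h1
  have hcnn : ∀ k, 1 ≤ k → k ≤ K → 0 ≤ E0 * (1 / N k) := by
    intro k h1 h2
    have := hNpos k h1 h2
    positivity
  -- concavity of each g k on Ioi 0
  have hgconc : ∀ k, 1 ≤ k → k ≤ K → ConcaveOn ℝ (Set.Ioi (0:ℝ)) (gfun N K E0 k) := by
    intro k h1 h2
    by_cases hk : k < K
    · have hNk := hNpos k h1 h2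
      have hNk1 := hNpos (k+1) (by omega) (by omega)
      have hmono := hNmono k h1 hk
      have hcc : E0 * (1 / N k) ≤ E0 * (1 / N (k+1)) := by
        have : 1 / N k ≤ 1 / N (k+1) := by
          rw [div_le_div_iff₀ hNk hNk1]
          linarith
        exact mul_le_mul_of_nonneg_left this hE0
      have hgeq : gfun N K E0 k = fun x => N k * Real.log (E0 * (1 / N k) + x) -
          N (k+1) * Real.log (E0 * (1 / N (k+1)) + x) := by
        funext x; simp [gfun, hk]
      rw [hgeq]
      exact aux_concave (N k) (N (k+1)) (E0 * (1 / N k)) (E0 * (1 / N (k+1)))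
        hNk hNk1.le hmono.le (hcnn k h1 h2) hcc
    · have hNk := hNpos k h1 h2
      have hgeq : gfun N K E0 k = fun x => N k * Real.log (E0 * (1 / N k) + x) -
          0 * Real.log (E0 * (1 / N k) + x) := by
        funext x; simp [gfun, hk]
      rw [hgeq]
      exact aux_concave (N k) 0 (E0 * (1 / N k)) (E0 * (1 / N k)) hNk le_rfl hNk.le
        (hcnn k h1 h2) le_rfl
  -- concavity of each coordinate composition
  have hcomp : ∀ k, 1 ≤ k → k ≤ K →
      ConcaveOn ℝ {β : ℕ → ℝ | ∀ k, 0 < β k} (fun β : ℕ → ℝ => gfun N K E0 k (β k)) := by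
    intro k h1 h2
    have h3 := (hgconc k h1 h2).comp_affineMap
      ((LinearMap.proj k : ((ℕ → ℝ) →ₗ[ℝ] ℝ)).toAffineMap)
    exact ConcaveOn.subset h3 (fun β hβ => hβ k) hs
  -- concavity of the sum
  have hsumconc : ∀ t : Finset ℕ,
      (∀ k ∈ t, ConcaveOn ℝ {β : ℕ → ℝ | ∀ k, 0 < β k} (fun β : ℕ → ℝ => gfun N K E0 k (β k))) →
      ConcaveOn ℝ {β : ℕ → ℝ | ∀ k, 0 < β k}
        (fun β : ℕ → ℝ => ∑ k ∈ t, gfun N K E0 k (β k)) := by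
    intro t
    induction t using Finset.cons_induction with
    | empty => intro _; simpa using concaveOn_const (0:ℝ) hs
    | cons a t ha ih =>
      intro h
      have h4 := (h a (Finset.mem_cons_self a t)).add
        (ih (fun k hk => h k (Finset.mem_cons_of_mem hk)))
      have heq : (fun β : ℕ → ℝ => ∑ k ∈ Finset.cons a t ha, gfun N K E0 k (β k)) =
          (fun β : ℕ → ℝ => gfun N K E0 a (β a)) +
          fun β : ℕ → ℝ => ∑ k ∈ t, gfun N K E0 k (β k) := by
        funext β; rw [Finset.sum_cons]; rfl
      rw [heq]
      exact h4
  have hsum := hsumconc (Finset.Icc 1 K)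
    (fun k hk => hcomp k (Finset.mem_Icc.mp hk).1 (Finset.mem_Icc.mp hk).2)
  have hF : ConcaveOn ℝ {β : ℕ → ℝ | ∀ k, 0 < β k}
      (fun β : ℕ → ℝ => (∑ k ∈ Finset.Icc 1 K, gfun N K E0 k (β k)) -
        N 1 * Real.log (E0 * (1 / N 1) + 1)) :=
    hsum.sub (convexOn_const _ hs)
  -- equality on the orthant
  refine hF.congr (fun β hβ => ?_)
  have hβpos : ∀ k, 0 < β k := hβ
  have hpos1 : ∀ k ∈ Finset.Icc 1 K, 0 < E0 * (1 / N k) + β k := by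
    intro k hk
    obtain ⟨h1, h2⟩ := Finset.mem_Icc.mp hk
    have := hcnn k h1 h2
    have := hβpos k
    linarith
  have hpos2 : ∀ k ∈ Finset.Icc 1 K,
      0 < E0 * (1 / N k) + (if k = 1 then 1 else β (k-1)) := by
    intro k hk
    obtain ⟨h1, h2⟩ := Finset.mem_Icc.mp hk
    have := hcnn k h1 h2
    by_cases h : k = 1
    · simp only [h, if_pos]
      have := hcnn 1 le_rfl hK
      simp [h] at this ⊢
      linarith
    · have := hβpos (k-1)
      rw [if_neg h]
      linarith
  have e1 : ∀ k ∈ Finset.Icc 1 K,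
      N k * Real.log ((E0 * (1 / N k) + β k) /
        (E0 * (1 / N k) + (if k = 1 then 1 else β (k - 1)))) =
      N k * Real.log (E0 * (1 / N k) + β k) -
        N k * Real.log (E0 * (1 / N k) + (if k = 1 then 1 else β (k-1))) := by
    intro k hk
    rw [Real.log_div (hpos1 k hk).ne' (hpos2 k hk).ne', mul_sub]
  have hA : ED β = (∑ k ∈ Finset.Icc 1 K, N k * Real.log (E0 * (1 / N k) + β k)) -
      (∑ k ∈ Finset.Icc 1 K,
        N k * Real.log (E0 * (1 / N k) + (if k = 1 then 1 else β (k-1)))) := by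
    rw [hED β, Finset.sum_congr rfl e1, Finset.sum_sub_distrib]
  have hG : (∑ k ∈ Finset.Icc 1 K, gfun N K E0 k (β k)) =
      (∑ k ∈ Finset.Icc 1 K, N k * Real.log (E0 * (1 / N k) + β k)) -
      (∑ k ∈ Finset.Icc 1 K,
        (if k < K then N (k+1) * Real.log (E0 * (1 / N (k+1)) + β k) else 0)) := by
    simp only [gfun]
    rw [Finset.sum_sub_distrib]
  have hshift : (∑ k ∈ Finset.Icc 1 K,
        N k * Real.log (E0 * (1 / N k) + (if k = 1 then 1 else β (k-1)))) =
      N 1 * Real.log (E0 * (1 / N 1) + 1) +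
      ∑ k ∈ Finset.Icc 1 K,
        (if k < K then N (k+1) * Real.log (E0 * (1 / N (k+1)) + β k) else 0) :=
    shift_sum K hK (fun k x => N k * Real.log (E0 * (1 / N k) + x)) β
  beta_reduce
  rw [hG, hA, hshift]
  ring
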